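/- Let ε : {1,...,2n} → {1,*} be a tuple with the Dyck property, and let Φ_n : P₂(2n) → D_{(1,*)}(2n) be the map sending a pair-partition π to the tuple ε with ε(min W) = 1 and ε(max W) = * for each block W of s_n·π, where s_n is the labels-to-heights permutation. Then the cardinality of the fiber Φ_n^{-1}(ε) equals the product over all h with ε(h) = * of Choice_ε(h). -/
import Mathlib


open scoped Classical

/-- A pair-partition of `Fin m`: every equivalence class has exactly 2 elements. -/
def IsPairPartition {m : ℕ} (π : Setoid (Fin m)) : Prop :=
  ∀ i : Fin m, Nat.card {j : Fin m // π.r i j} = 2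

/-- Number of crossings of a pair-partition, counted as quadruples a<b<c<d with
a ~ c, b ~ d, ¬ a ~ b. -/
noncomputable def crossings {m : ℕ} (π : Setoid (Fin m)) : ℕ :=
  Nat.card {t : Fin m × Fin m × Fin m × Fin m //
    t.1 < t.2.1 ∧ t.2.1 < t.2.2.1 ∧ t.2.2.1 < t.2.2.2 ∧
    π.r t.1 t.2.2.1 ∧ π.r t.2.1 t.2.2.2 ∧ ¬ π.r t.1 t.2.1}

/-- Number of blocks of a partition (setoid). -/
noncomputable def numBlocks {m : ℕ} (π : Setoid (Fin m)) : ℕ :=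
  Nat.card (Quotient π)

/-- The rainbow pair-partition ρ_{2n} (0-indexed: i paired with 2n-1-i). -/
def rainbow (n : ℕ) : Setoid (Fin (2*n)) where
  r i j := i = j ∨ (i : ℕ) + (j : ℕ) = 2*n - 1
  iseqv := by
    refine ⟨fun i => Or.inl rfl, ?_, ?_⟩
    · rintro i j (rfl | h)
      · exact Or.inl rfl
      · exact Or.inr (by omega)
    · rintro i j k (rfl | h1) (h2 | h2)
      · exact Or.inl h2
      · exact Or.inr h2
      · subst h2; exact Or.inr h1
      · have hi := i.2; have hk := k.2
        exact Or.inl (Fin.ext (by omega))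

/-- The interval pair-partition { {1,2}, {3,4}, ... } (0-indexed: blocks {2k,2k+1}). -/
def intervalPP (n : ℕ) : Setoid (Fin (2*n)) where
  r i j := (i : ℕ) / 2 = (j : ℕ) / 2
  iseqv := ⟨fun _ => rfl, Eq.symm, Eq.trans⟩

/-- The labels-to-heights permutation s_n (0-indexed). -/
noncomputable def sPerm (n : ℕ) : Equiv.Perm (Fin (2*n)) :=
  Equiv.ofBijective
    (fun i => if h : (i : ℕ) < n then ⟨2*i, by have := i.2; omega⟩
              else ⟨4*n - 2*i - 1, by have := i.2; omega⟩)
    (by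
      rw [Fintype.bijective_iff_injective_and_card]
      refine ⟨?_, rfl⟩
      intro i j hij
      have hi := i.2; have hj := j.2
      apply Fin.ext
      simp only [] at hij
      split_ifs at hij <;> simp only [Fin.mk.injEq] at hij <;> omega)

/-- Blockwise action of a permutation on a partition. -/
def permAct {m : ℕ} (s : Equiv.Perm (Fin m)) (π : Setoid (Fin m)) : Setoid (Fin m) :=
  Setoid.comap s.symm π

/-- The map Φ_n : pair-partitions → tuples in {1,*}^{2n} (true = "1", false = "*"):
a point is `true` iff it is the minimum of its block of s_n · π. -/
noncomputable def PhiMap (n : ℕ) (π : Setoid (Fin (2*n))) : Fin (2*n) → Bool :=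
  fun i => @decide (∀ j, (permAct (sPerm n) π).r i j → i ≤ j) (Classical.propDecidable _)

/-- Number of positions i < h with ε i = b. -/
noncomputable def countVal {m : ℕ} (ε : Fin m → Bool) (b : Bool) (h : ℕ) : ℕ :=
  Nat.card {i : Fin m // (i : ℕ) < h ∧ ε i = b}

/-- The Dyck property for a tuple ε : {1,...,2n} → {1,*} (true = "1", false = "*"). -/
def IsDyck {n : ℕ} (ε : Fin (2*n) → Bool) : Prop :=
  (∀ h : ℕ, h ≤ 2*n → countVal ε false h ≤ countVal ε true h) ∧
  countVal ε true (2*n) = n ∧ countVal ε false (2*n) = n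

/-- The choice number Choice_ε(h). -/
noncomputable def choiceNum {n : ℕ} (ε : Fin (2*n) → Bool) (h : Fin (2*n)) : ℕ :=
  countVal ε true (h : ℕ) - countVal ε false (h : ℕ)


open Finset


lemma sigma_sub_ext {G : Type*} {β : Type*} {P : G → β → Prop}
    (a b : Σ g : G, {t : β // P g t}) (h1 : a.1 = b.1) (h2 : a.2.1 = b.2.1) : a = b := by
  rcases a with ⟨g1, t1⟩
  rcases b with ⟨g2, t2⟩
  cases h1
  simp only at h2
  exact congrArg (Sigma.mk g1) (Subtype.ext h2)

lemma count_inj (m : ℕ) (ε : Fin m → Bool) (F : Finset (Fin m)) :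
    Nat.card {f : F → Fin m // Function.Injective f ∧
      ∀ h : F, ε (f h) = true ∧ f h < (h : Fin m)} =
    ∏ h ∈ F, ((Finset.univ.filter (fun t : Fin m => t < h ∧ ε t = true)).card
              - (F.filter (· < h)).card) := by
  induction F using Finset.strongInduction with
  | _ F ih =>
    rcases F.eq_empty_or_nonempty with rfl | hF
    · rw [Finset.prod_empty]
      rw [Nat.card_eq_one_iff_unique]
      constructor
      · constructor
        intro a b
        apply Subtype.ext
        funext h
        exact absurd h.2 (Finset.notMem_empty _)
      · exact ⟨⟨fun h => absurd h.2 (Finset.notMem_empty _),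
          fun h₁ => absurd h₁.2 (Finset.notMem_empty _),
          fun h => absurd h.2 (Finset.notMem_empty _)⟩⟩
    · set M := F.max' hF with hM
      have hMF : M ∈ F := F.max'_mem hF
      set F' := F.erase M with hF'
      have hsub : F' ⊂ F := Finset.erase_ssubset hMF
      have hlt : ∀ h : F', (h : Fin m) < M := by
        intro h
        have h1 : (h : Fin m) ∈ F' := h.2
        have h2 : (h : Fin m) ≠ M := (Finset.mem_erase.mp h1).1
        have h3 : (h : Fin m) ≤ M := F.le_max' _ (Finset.mem_erase.mp h1).2
        exact lt_of_le_of_ne h3 h2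
      -- the big equivalence
      have e : {f : F → Fin m // Function.Injective f ∧
          ∀ h : F, ε (f h) = true ∧ f h < (h : Fin m)} ≃
          Σ g : {g : F' → Fin m // Function.Injective g ∧
            ∀ h : F', ε (g h) = true ∧ g h < (h : Fin m)},
            {t : Fin m // (t < M ∧ ε t = true) ∧ ∀ h : F', g.1 h ≠ t} := by
        refine ⟨fun f => ⟨⟨fun h => f.1 ⟨h, (Finset.mem_erase.mp h.2).2⟩, ?_, ?_⟩,
            f.1 ⟨M, hMF⟩, ?_, ?_⟩, fun gt => ⟨fun h =>
            if hh : (h : Fin m) = M then gt.2.1 else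
              gt.1.1 ⟨h, Finset.mem_erase.mpr ⟨hh, h.2⟩⟩, ?_, ?_⟩, ?_, ?_⟩
        · intro a b hab
          have h0 := f.2.1 hab
          rw [Subtype.mk.injEq] at h0
          have h1 : (a : Fin m) = (b : Fin m) := h0
          exact Subtype.ext h1
        · intro h; exact f.2.2 _
        · exact ⟨(f.2.2 ⟨M, hMF⟩).2, (f.2.2 ⟨M, hMF⟩).1⟩
        · intro h heq
          have h0 := f.2.1 heq
          rw [Subtype.mk.injEq] at h0
          have h1 : (h : Fin m) = M := h0
          exact (Finset.mem_erase.mp h.2).1 h1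
        · -- injectivity of assembled function
          intro a b hab
          simp only at hab
          by_cases ha : (a : Fin m) = M <;> by_cases hb : (b : Fin m) = M
          · exact Subtype.ext (ha.trans hb.symm)
          · rw [dif_pos ha, dif_neg hb] at hab
            exact absurd hab.symm (gt.2.2.2 _)
          · rw [dif_neg ha, dif_pos hb] at hab
            exact absurd hab (gt.2.2.2 _)
          · rw [dif_neg ha, dif_neg hb] at hab
            have h0 := gt.1.2.1 hab
            rw [Subtype.mk.injEq] at h0
            exact Subtype.ext h0
        · intro h
          by_cases hh : (h : Fin m) = M
          · simp only [dif_pos hh]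
            exact ⟨gt.2.2.1.2, lt_of_lt_of_le gt.2.2.1.1 (le_of_eq hh.symm)⟩
          · simp only [dif_neg hh]
            exact gt.1.2.2 _
        · -- left inverse
          intro f
          apply Subtype.ext
          funext h
          simp only
          by_cases hh : (h : Fin m) = M
          · rw [dif_pos hh]
            exact congrArg f.1 (Subtype.ext hh.symm)
          · rw [dif_neg hh]
        · -- right inverse
          rintro ⟨g, t⟩
          apply sigma_sub_ext
          · apply Subtype.ext
            funext h
            simp only
            rw [dif_neg (Finset.mem_erase.mp h.2).1]
          · exact dif_pos rfl
      rw [Nat.card_congr e]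
      have hTcard : ∀ g : {g : F' → Fin m // Function.Injective g ∧
            ∀ h : F', ε (g h) = true ∧ g h < (h : Fin m)},
          Fintype.card {t : Fin m // (t < M ∧ ε t = true) ∧ ∀ h : F', g.1 h ≠ t} =
          (univ.filter (fun t : Fin m => t < M ∧ ε t = true)).card - F'.card := by
        intro g
        rw [Fintype.card_subtype]
        have himg : (Finset.univ.image g.1) ⊆
            univ.filter (fun t : Fin m => t < M ∧ ε t = true) := by
          intro t ht
          rcases Finset.mem_image.mp ht with ⟨h, -, rfl⟩
          exact Finset.mem_filter.mpr ⟨Finset.mem_univ _,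
            lt_trans (g.2.2 h).2 (hlt h), (g.2.2 h).1⟩
        have hset : univ.filter
            (fun t : Fin m => (t < M ∧ ε t = true) ∧ ∀ h : F', g.1 h ≠ t) =
            (univ.filter (fun t : Fin m => t < M ∧ ε t = true)) \
              (Finset.univ.image g.1) := by
          ext t
          simp only [Finset.mem_filter, Finset.mem_sdiff, Finset.mem_univ, true_and,
            Finset.mem_image]
          tauto
        rw [hset, Finset.card_sdiff_of_subset himg, Finset.card_image_of_injective _ g.2.1,
          Finset.card_univ, Fintype.card_coe]
      rw [Nat.card_eq_fintype_card, Fintype.card_sigma]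
      have hsum : ∑ g : {g : F' → Fin m // Function.Injective g ∧
            ∀ h : F', ε (g h) = true ∧ g h < (h : Fin m)},
          Fintype.card {t : Fin m // (t < M ∧ ε t = true) ∧ ∀ h : F', g.1 h ≠ t} =
          (Nat.card {g : F' → Fin m // Function.Injective g ∧
            ∀ h : F', ε (g h) = true ∧ g h < (h : Fin m)}) *
          ((univ.filter (fun t : Fin m => t < M ∧ ε t = true)).card - F'.card) := by
        rw [Finset.sum_congr rfl (fun g _ => hTcard g), Finset.sum_const, smul_eq_mul,
          Finset.card_univ, Nat.card_eq_fintype_card]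
      rw [hsum, ih F' hsub]
      -- now pure product manipulation
      have hfM : F.filter (· < M) = F' := by
        ext i
        simp only [Finset.mem_filter, hF', Finset.mem_erase]
        constructor
        · rintro ⟨h1, h2⟩
          exact ⟨ne_of_lt h2, h1⟩
        · rintro ⟨h1, h2⟩
          exact ⟨h2, lt_of_le_of_ne (F.le_max' _ h2) h1⟩
      have hfh : ∀ h ∈ F', F.filter (· < h) = F'.filter (· < h) := by
        intro h hh
        have hhM : h < M := lt_of_le_of_ne (F.le_max' _ (Finset.mem_erase.mp hh).2)
          (Finset.mem_erase.mp hh).1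
        ext i
        simp only [Finset.mem_filter, hF', Finset.mem_erase]
        constructor
        · rintro ⟨h1, h2⟩
          exact ⟨⟨ne_of_lt (lt_trans h2 hhM), h1⟩, h2⟩
        · rintro ⟨⟨h1, h2⟩, h3⟩
          exact ⟨h2, h3⟩
      rw [← Finset.mul_prod_erase F _ hMF, hfM, mul_comm]
      congr 1
      exact (Finset.prod_congr rfl (fun h hh => by rw [hfh h hh])).symm


/-- `minMap σ i` is true iff `i` is the minimum of its block. -/
noncomputable def minMap {m : ℕ} (σ : Setoid (Fin m)) : Fin m → Bool :=
  fun i => @decide (∀ j, σ.r i j → i ≤ j) (Classical.propDecidable _)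

lemma phiMap_eq_minMap (n : ℕ) (π : Setoid (Fin (2*n))) :
    PhiMap n π = minMap (permAct (sPerm n) π) := rfl

lemma minMap_true_iff {m : ℕ} (σ : Setoid (Fin m)) (i : Fin m) :
    minMap σ i = true ↔ ∀ j, σ.r i j → i ≤ j := by
  simp [minMap]

lemma minMap_false_iff {m : ℕ} (σ : Setoid (Fin m)) (i : Fin m) :
    minMap σ i = false ↔ ¬ ∀ j, σ.r i j → i ≤ j := by
  rw [← minMap_true_iff σ i]
  simp

/-- permAct as an equivalence on setoids. -/
def permActEquiv {m : ℕ} (s : Equiv.Perm (Fin m)) : Setoid (Fin m) ≃ Setoid (Fin m) where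
  toFun := permAct s
  invFun := permAct s.symm
  left_inv π := Setoid.ext fun a b => by
    show π.r (s.symm (s.symm.symm a)) (s.symm (s.symm.symm b)) ↔ π.r a b
    simp
  right_inv π := Setoid.ext fun a b => by
    show π.r (s.symm.symm (s.symm a)) (s.symm.symm (s.symm b)) ↔ π.r a b
    simp

lemma card_class_permAct {m : ℕ} (s : Equiv.Perm (Fin m)) (π : Setoid (Fin m)) (i : Fin m) :
    Nat.card {j : Fin m // (permAct s π).r (s i) j} = Nat.card {j : Fin m // π.r i j} := by
  apply Nat.card_congr
  refine Equiv.subtypeEquiv (s.symm : Fin m ≃ Fin m) (fun j => ?_)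
  show π.r (s.symm (s i)) (s.symm j) ↔ π.r i (s.symm j)
  rw [Equiv.symm_apply_apply]

lemma isPairPartition_permAct {m : ℕ} (s : Equiv.Perm (Fin m)) (π : Setoid (Fin m)) :
    IsPairPartition (permAct s π) ↔ IsPairPartition π := by
  constructor
  · intro h i
    rw [← card_class_permAct s π i]
    exact h (s i)
  · intro h i
    have := card_class_permAct s π (s.symm i)
    rw [Equiv.apply_symm_apply] at this
    rw [this]
    exact h (s.symm i)

lemma exists_partner {m : ℕ} {σ : Setoid (Fin m)} (hσ : IsPairPartition σ) (i : Fin m) :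
    ∃ j, j ≠ i ∧ σ.r i j ∧ ∀ k, k ≠ i → σ.r i k → k = j := by
  have h2 : (univ.filter (σ.r i)).card = 2 := by
    rw [← Fintype.card_subtype, ← Nat.card_eq_fintype_card]
    exact hσ i
  rcases Finset.card_eq_two.mp h2 with ⟨a, b, hab, hS⟩
  have hi : i ∈ univ.filter (σ.r i) := mem_filter.mpr ⟨mem_univ _, σ.refl i⟩
  have hmem : ∀ k, σ.r i k → k = a ∨ k = b := by
    intro k hk
    have : k ∈ univ.filter (σ.r i) := mem_filter.mpr ⟨mem_univ _, hk⟩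
    rw [hS] at this
    simpa using this
  have hra : σ.r i a := by
    have : a ∈ univ.filter (σ.r i) := by rw [hS]; simp
    exact (mem_filter.mp this).2
  have hrb : σ.r i b := by
    have : b ∈ univ.filter (σ.r i) := by rw [hS]; simp
    exact (mem_filter.mp this).2
  rw [hS] at hi
  simp only [mem_insert, mem_singleton] at hi
  rcases hi with rfl | rfl
  · refine ⟨b, fun h => hab h.symm, hrb, fun k hk hrk => ?_⟩
    rcases hmem k hrk with rfl | rfl
    · exact absurd rfl hk
    · rfl
  · refine ⟨a, hab, hra, fun k hk hrk => ?_⟩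
    rcases hmem k hrk with rfl | rfl
    · rfl
    · exact absurd rfl hk

noncomputable def partner {m : ℕ} (σ : Setoid (Fin m)) (hσ : IsPairPartition σ)
    (i : Fin m) : Fin m := (exists_partner hσ i).choose

lemma partner_ne {m : ℕ} (σ : Setoid (Fin m)) (hσ : IsPairPartition σ) (i : Fin m) :
    partner σ hσ i ≠ i := (exists_partner hσ i).choose_spec.1

lemma partner_rel {m : ℕ} (σ : Setoid (Fin m)) (hσ : IsPairPartition σ) (i : Fin m) :
    σ.r i (partner σ hσ i) := (exists_partner hσ i).choose_spec.2.1

lemma partner_unique {m : ℕ} (σ : Setoid (Fin m)) (hσ : IsPairPartition σ) {i k : Fin m}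
    (hk : k ≠ i) (hr : σ.r i k) : k = partner σ hσ i :=
  (exists_partner hσ i).choose_spec.2.2 k hk hr

lemma partner_partner {m : ℕ} (σ : Setoid (Fin m)) (hσ : IsPairPartition σ) (i : Fin m) :
    partner σ hσ (partner σ hσ i) = i := by
  refine (partner_unique σ hσ (Ne.symm (partner_ne σ hσ i)) (σ.symm (partner_rel σ hσ i))).symm

lemma rel_iff_partner {m : ℕ} (σ : Setoid (Fin m)) (hσ : IsPairPartition σ) (i j : Fin m) :
    σ.r i j ↔ j = i ∨ j = partner σ hσ i := by
  constructor
  · intro h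
    by_cases hj : j = i
    · exact Or.inl hj
    · exact Or.inr (partner_unique σ hσ hj h)
  · rintro (rfl | rfl)
    · exact σ.refl j
    · exact partner_rel σ hσ i

lemma minMap_true_iff_partner {m : ℕ} (σ : Setoid (Fin m)) (hσ : IsPairPartition σ)
    (i : Fin m) : minMap σ i = true ↔ i < partner σ hσ i := by
  rw [minMap_true_iff]
  constructor
  · intro h
    exact lt_of_le_of_ne (h _ (partner_rel σ hσ i)) (Ne.symm (partner_ne σ hσ i))
  · intro h j hj
    rcases (rel_iff_partner σ hσ i j).mp hj with rfl | rfl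
    · exact le_refl _
    · exact le_of_lt h

lemma minMap_false_iff_partner {m : ℕ} (σ : Setoid (Fin m)) (hσ : IsPairPartition σ)
    (i : Fin m) : minMap σ i = false ↔ partner σ hσ i < i := by
  rw [← Bool.not_eq_true, minMap_true_iff_partner σ hσ i]
  constructor
  · intro h
    exact lt_of_le_of_ne (le_of_not_gt h) (partner_ne σ hσ i)
  · intro h
    exact not_lt_of_gt h

lemma countVal_eq_filter {m : ℕ} (ε : Fin m → Bool) (b : Bool) (x : ℕ) :
    countVal ε b x = (univ.filter (fun i : Fin m => (i : ℕ) < x ∧ ε i = b)).card := by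
  rw [countVal, Nat.card_eq_fintype_card, Fintype.card_subtype]

lemma countVal_top {n : ℕ} (ε : Fin (2*n) → Bool) (b : Bool) :
    countVal ε b (2*n) = (univ.filter (fun i : Fin (2*n) => ε i = b)).card := by
  rw [countVal_eq_filter]
  congr 1
  apply Finset.filter_congr
  intro i _
  simp [i.2]


noncomputable def psiMap {m : ℕ} (ε : Fin m → Bool)
    (σp : {σ : Setoid (Fin m) // IsPairPartition σ ∧ minMap σ = ε}) :
    {f : (univ.filter (fun i : Fin m => ε i = false)) → Fin m //
      Function.Injective f ∧ ∀ h, ε (f h) = true ∧ f h < (h : Fin m)} := by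
  refine ⟨fun h => partner σp.1 σp.2.1 h, ?_, ?_⟩
  · intro a b hab
    have h2 : (a : Fin m) = (b : Fin m) := by
      have := congrArg (partner σp.1 σp.2.1) hab
      rwa [partner_partner, partner_partner] at this
    exact Subtype.ext h2
  · intro h
    have hF : ε (h : Fin m) = false := (mem_filter.mp h.2).2
    have h1 : partner σp.1 σp.2.1 h < (h : Fin m) := by
      apply (minMap_false_iff_partner σp.1 σp.2.1 _).mp
      rw [σp.2.2]; exact hF
    have h2 : minMap σp.1 (partner σp.1 σp.2.1 h) = true :=
      (minMap_true_iff_partner σp.1 σp.2.1 _).mpr (by rw [partner_partner]; exact h1)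
    exact ⟨(congrFun σp.2.2 _).symm.trans h2, h1⟩

lemma psiMap_inj {m : ℕ} (ε : Fin m → Bool) : Function.Injective (psiMap ε) := by
  intro σ₁ σ₂ h
  have hfun := congrArg Subtype.val h
  simp only [psiMap] at hfun
  have hall : ∀ i, partner σ₁.1 σ₁.2.1 i = partner σ₂.1 σ₂.2.1 i := by
    intro i
    cases hc : ε i with
    | false => exact congrFun hfun ⟨i, mem_filter.mpr ⟨mem_univ _, hc⟩⟩
    | true =>
      have hi1 : i < partner σ₁.1 σ₁.2.1 i := by
        apply (minMap_true_iff_partner σ₁.1 σ₁.2.1 i).mp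
        rw [σ₁.2.2]; exact hc
      have hmem : minMap σ₁.1 (partner σ₁.1 σ₁.2.1 i) = false :=
        (minMap_false_iff_partner σ₁.1 σ₁.2.1 _).mpr (by rw [partner_partner]; exact hi1)
      have hmem' : ε (partner σ₁.1 σ₁.2.1 i) = false := (congrFun σ₁.2.2 _).symm.trans hmem
      have hj := congrFun hfun ⟨partner σ₁.1 σ₁.2.1 i, mem_filter.mpr ⟨mem_univ _, hmem'⟩⟩
      simp only at hj
      rw [partner_partner] at hj
      have := congrArg (partner σ₂.1 σ₂.2.1) hj
      rw [partner_partner] at this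
      rw [← this]
  apply Subtype.ext
  apply Setoid.ext
  intro a b
  rw [rel_iff_partner σ₁.1 σ₁.2.1, rel_iff_partner σ₂.1 σ₂.2.1, hall a]

lemma psiMap_surj {m : ℕ} (ε : Fin m → Bool)
    (hcard : (univ.filter (fun i : Fin m => ε i = true)).card =
      (univ.filter (fun i : Fin m => ε i = false)).card) :
    Function.Surjective (psiMap ε) := by
  intro f
  have hcov : ∀ i : Fin m, ε i = true →
      ∃ h : (univ.filter (fun i : Fin m => ε i = false)), f.1 h = i := by
    have hI : (univ.image f.1) ⊆ univ.filter (fun i : Fin m => ε i = true) := by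
      intro t ht
      rcases Finset.mem_image.mp ht with ⟨h, -, rfl⟩
      exact mem_filter.mpr ⟨mem_univ _, (f.2.2 h).1⟩
    have hIc : (univ.image f.1).card =
        (univ.filter (fun i : Fin m => ε i = false)).card := by
      rw [Finset.card_image_of_injective _ f.2.1, Finset.card_univ, Fintype.card_coe]
    have hIT : (univ.image f.1) = univ.filter (fun i : Fin m => ε i = true) :=
      Finset.eq_of_subset_of_card_le hI (by rw [hIc, hcard])
    intro i hi
    have : i ∈ univ.image f.1 := by rw [hIT]; exact mem_filter.mpr ⟨mem_univ _, hi⟩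
    rcases Finset.mem_image.mp this with ⟨h, -, hh⟩
    exact ⟨h, hh⟩
  classical
  set p : Fin m → Fin m := fun i =>
    if hc : ε i = false then f.1 ⟨i, mem_filter.mpr ⟨mem_univ _, hc⟩⟩
    else ↑((hcov i (by revert hc; cases ε i <;> simp)).choose) with hp
  have key1 : ∀ i, (hc : ε i = false) →
      p i = f.1 ⟨i, mem_filter.mpr ⟨mem_univ _, hc⟩⟩ := by
    intro i hc; simp only [hp, dif_pos hc]
  have key2 : ∀ i, (hc : ε i = true) →
      ∃ h : (univ.filter (fun i : Fin m => ε i = false)),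
        f.1 h = i ∧ p i = ↑h := by
    intro i hc
    have hc' : ¬ (ε i = false) := by rw [hc]; simp
    refine ⟨(hcov i hc).choose, (hcov i hc).choose_spec, ?_⟩
    simp only [hp, dif_neg hc']
  have prop1 : ∀ i, ε i = false → ε (p i) = true ∧ p i < i := by
    intro i hc
    rw [key1 i hc]
    exact f.2.2 _
  have prop2 : ∀ i, ε i = true → ε (p i) = false ∧ i < p i := by
    intro i hc
    rcases key2 i hc with ⟨h, hfh, hpi⟩
    rw [hpi]
    refine ⟨(mem_filter.mp h.2).2, ?_⟩
    rw [← hfh]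
    exact (f.2.2 h).2
  have invol : ∀ i, p (p i) = i := by
    intro i
    cases hc : ε i with
    | false =>
      have h1 := (prop1 i hc).1
      rcases key2 (p i) h1 with ⟨h, hfh, hpp⟩
      rw [key1 i hc] at hfh
      have := f.2.1 hfh
      rw [hpp, this]
    | true =>
      rcases key2 i hc with ⟨h, hfh, hpi⟩
      have hc' : ε (p i) = false := (prop2 i hc).1
      rw [key1 (p i) hc']
      exact (congrArg f.1 (Subtype.ext hpi)).trans hfh
  have pne : ∀ i, p i ≠ i := by
    intro i
    cases hc : ε i with
    | false => exact ne_of_lt (prop1 i hc).2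
    | true => exact ne_of_gt (prop2 i hc).2
  set σ : Setoid (Fin m) := ⟨fun a b => a = b ∨ b = p a, by
    refine ⟨fun a => Or.inl rfl, ?_, ?_⟩
    · rintro a b (rfl | rfl)
      · exact Or.inl rfl
      · exact Or.inr (invol a).symm
    · rintro a b c (rfl | rfl) (h | h)
      · exact Or.inl h
      · exact Or.inr h
      · rw [← h]; exact Or.inr rfl
      · rw [h, invol]; exact Or.inl rfl⟩ with hσ
  have hpp : IsPairPartition σ := by
    intro i
    rw [Nat.card_eq_fintype_card, Fintype.card_subtype]
    have hflt : univ.filter (fun j => σ.r i j) = {i, p i} := by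
      ext j
      simp only [mem_filter, mem_univ, true_and, mem_insert, mem_singleton]
      show i = j ∨ j = p i ↔ j = i ∨ j = p i
      rw [eq_comm]
    rw [hflt]
    exact Finset.card_pair (Ne.symm (pne i))
  have hmin : minMap σ = ε := by
    funext i
    cases hc : ε i with
    | true =>
      apply (minMap_true_iff _ _).mpr
      rintro j (rfl | rfl)
      · exact le_refl _
      · exact le_of_lt (prop2 i hc).2
    | false =>
      apply (minMap_false_iff _ _).mpr
      intro hall
      exact absurd (hall _ (Or.inr rfl)) (not_le_of_gt (prop1 i hc).2)
  refine ⟨⟨σ, hpp, hmin⟩, ?_⟩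
  apply Subtype.ext
  funext h
  show partner σ hpp ↑h = f.1 h
  have hF : ε (h : Fin m) = false := (mem_filter.mp h.2).2
  have hrel : σ.r ↑h (f.1 h) := by
    refine Or.inr ?_
    rw [key1 _ hF]
  have hne : f.1 h ≠ ↑h := ne_of_lt (f.2.2 h).2
  exact (partner_unique σ hpp hne hrel).symm

/-- the fiber of Φ_n over a Dyck tuple ε has cardinality
∏_{h : ε(h) = *} Choice_ε(h). -/
theorem stmt_2 (n : ℕ) (ε : Fin (2*n) → Bool) (hε : IsDyck ε) :
    Nat.card {π : Setoid (Fin (2*n)) // IsPairPartition π ∧ PhiMap n π = ε} =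
      ∏ h ∈ Finset.univ.filter (fun h : Fin (2*n) => ε h = false), choiceNum ε h := by
  classical
  have step1 : Nat.card {π : Setoid (Fin (2*n)) // IsPairPartition π ∧ PhiMap n π = ε} =
      Nat.card {σ : Setoid (Fin (2*n)) // IsPairPartition σ ∧ minMap σ = ε} := by
    apply Nat.card_congr
    refine Equiv.subtypeEquiv (permActEquiv (sPerm n)) (fun π => ?_)
    constructor
    · rintro ⟨h1, h2⟩
      exact ⟨(isPairPartition_permAct _ _).mpr h1, h2⟩
    · rintro ⟨h1, h2⟩
      exact ⟨(isPairPartition_permAct _ _).mp h1, h2⟩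
  have hcard : (univ.filter (fun i : Fin (2*n) => ε i = true)).card =
      (univ.filter (fun i : Fin (2*n) => ε i = false)).card := by
    rw [← countVal_top ε true, ← countVal_top ε false, hε.2.1, hε.2.2]
  have step2 : Nat.card {σ : Setoid (Fin (2*n)) // IsPairPartition σ ∧ minMap σ = ε} =
      Nat.card {f : (univ.filter (fun i : Fin (2*n) => ε i = false)) → Fin (2*n) //
        Function.Injective f ∧ ∀ h, ε (f h) = true ∧ f h < (h : Fin (2*n))} :=
    Nat.card_congr (Equiv.ofBijective (psiMap ε) ⟨psiMap_inj ε, psiMap_surj ε hcard⟩)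
  rw [step1, step2, count_inj]
  apply Finset.prod_congr rfl
  intro h hh
  simp only [choiceNum, countVal_eq_filter]
  have e1 : filter (fun t : Fin (2*n) => t < h ∧ ε t = true) univ =
      filter (fun i : Fin (2*n) => (i : ℕ) < (h : ℕ) ∧ ε i = true) univ := by
    ext i
    simp only [mem_filter, mem_univ, true_and, Fin.lt_def]
  have e2 : filter (fun x => x < h) (filter (fun i : Fin (2*n) => ε i = false) univ) =
      filter (fun i : Fin (2*n) => (i : ℕ) < (h : ℕ) ∧ ε i = false) univ := by
    ext i
    simp only [mem_filter, mem_univ, true_and, Fin.lt_def]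
    tauto
  rw [e1, e2]
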